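/- Let C be a category with pullbacks and let L ⊣ R be an adjunction of endofunctors L, R : C → C with unit η : Id → R ∘ L. Then for every object X, the unit component η_X : X → R(L X) is R-precise. -/
import Mathlib


open CategoryTheory CategoryTheory.Limits

universe v u

variable {C : Type u} [Category.{v} C]

/-- A morphism `s : S ⟶ R.obj R'` is `R`-precise if whenever `R h ∘ f = R g ∘ s`
there is a diagonal `d : R' ⟶ A` with `R d ∘ s = f` and `h ∘ d = g`. -/
def Precise (R : C ⥤ C) {S R' : C} (s : S ⟶ R.obj R') : Prop :=
  ∀ {A D : C} (f : S ⟶ R.obj A) (g : R' ⟶ D) (h : A ⟶ D),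
    f ≫ R.map h = s ≫ R.map g → ∃ d : R' ⟶ A, s ≫ R.map d = f ∧ d ≫ h = g

/-- For an adjunction `L ⊣ R` of endofunctors on a category with pullbacks,
every component of the unit `η_X : X ⟶ R (L X)` is `R`-precise. -/
theorem unit_precise [HasPullbacks C] (L R : C ⥤ C) (adj : L ⊣ R) (X : C) :
    Precise R (show X ⟶ R.obj (L.obj X) from adj.unit.app X) := by
  intro A D f g h hfg
  refine ⟨(adj.homEquiv X A).symm f, ?_, ?_⟩
  · have := (adj.homEquiv X A).apply_symm_apply f
    rwa [Adjunction.homEquiv_unit] at this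
  · apply (adj.homEquiv X D).injective
    rw [Adjunction.homEquiv_unit, Adjunction.homEquiv_unit, R.map_comp,
      ← Category.assoc]
    have h1 : adj.unit.app X ≫ R.map ((adj.homEquiv X A).symm f) = f := by
      have := (adj.homEquiv X A).apply_symm_apply f
      rwa [Adjunction.homEquiv_unit] at this
    rw [h1, hfg]
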